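/- The mixture of the de la Peña e-variables under a standard normal prior, namely √(1/(1+Σᵢzᵢ²)) · exp((Σᵢzᵢ)²/(2+2Σᵢzᵢ²)), has expectation at most 1 under independent uniform random sign flips J_i ∈ {−1,1} applied to fixed reals z₁,…,z_n. -/

import Mathlib

open Real MeasureTheory Finset

set_option maxHeartbeats 1000000 in
theorem mixture_de_la_pena_is_e_variable (n : ℕ) (z : Fin n → ℝ) :
    (1 / 2 ^ n) * ∑ s : Fin n → Bool,
        Real.sqrt (1 / (1 + ∑ i, (z i) ^ 2)) *
          Real.exp ((∑ i, (if s i then z i else -z i)) ^ 2 /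
            (2 + 2 * ∑ i, (z i) ^ 2)) ≤ 1 := by
  set S : ℝ := ∑ i, (z i)^2 with hS
  have hS0 : (0:ℝ) ≤ S := Finset.sum_nonneg fun i _ => sq_nonneg _
  have h1S : (0:ℝ) < 1 + S := by linarith
  have hb : (0:ℝ) < (1+S)/2 := by linarith
  have hsqrt2pi : (0:ℝ) < Real.sqrt (2*π) := Real.sqrt_pos.2 (by positivity)
  -- Gaussian integral with linear term
  have hgauss : ∀ c : ℝ, ∫ x : ℝ, Real.exp (-((1+S)/2) * (x - c)^2)
      = Real.sqrt (π / ((1+S)/2)) := by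
    intro c
    rw [MeasureTheory.integral_sub_right_eq_self (fun x : ℝ => Real.exp (-((1+S)/2) * x^2)) c]
    exact integral_gaussian _
  have hcs : ∀ T x : ℝ, T*x - (1+S)*x^2/2
      = -((1+S)/2) * (x - T/(1+S))^2 + T^2/(2*(1+S)) := by
    intro T x; field_simp; ring
  have hint : ∀ T : ℝ, Integrable (fun x : ℝ => Real.exp (T*x - (1+S)*x^2/2)) := by
    intro T
    have : (fun x : ℝ => Real.exp (T*x - (1+S)*x^2/2))
        = fun x : ℝ => Real.exp (T^2/(2*(1+S))) * Real.exp (-((1+S)/2) * (x - T/(1+S))^2) := by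
      funext x; rw [hcs T x, add_comm]; rw [Real.exp_add]
    rw [this]
    exact (((integrable_exp_neg_mul_sq hb).comp_sub_right (T/(1+S)))).const_mul _
  have key : ∀ T : ℝ, Real.sqrt (1/(1+S)) * Real.exp (T^2/(2+2*S))
      = (Real.sqrt (2*π))⁻¹ * ∫ x : ℝ, Real.exp (T*x - (1+S)*x^2/2) := by
    intro T
    have : ∫ x : ℝ, Real.exp (T*x - (1+S)*x^2/2)
        = Real.exp (T^2/(2*(1+S))) * Real.sqrt (π / ((1+S)/2)) := by
      rw [← hgauss (T/(1+S)), ← MeasureTheory.integral_const_mul]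
      congr 1; funext x; rw [hcs T x, add_comm]; rw [Real.exp_add]
    rw [this]
    have h2 : Real.sqrt (π / ((1+S)/2)) = Real.sqrt (2*π) * Real.sqrt (1/(1+S)) := by
      rw [← Real.sqrt_mul (by positivity)]
      congr 1; field_simp
    rw [h2, show (2:ℝ)+2*S = 2*(1+S) by ring]
    field_simp
  -- pointwise bound on the sum
  have hpt : ∀ x : ℝ, ∑ s : Fin n → Bool,
      Real.exp ((∑ i, (if s i then z i else -z i))*x - (1+S)*x^2/2)
      ≤ 2^n * Real.exp (-(1/2) * x^2) := by
    intro x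
    have expand : ∑ s : Fin n → Bool,
        Real.exp ((∑ i, (if s i then z i else -z i))*x)
        = ∏ i, (Real.exp (z i * x) + Real.exp (-(z i * x))) := by
      have := Finset.sum_prod_piFinset (ι := Fin n) (univ : Finset Bool)
        (fun i b => Real.exp ((if b then z i else -z i) * x))
      rw [Fintype.piFinset_univ] at this
      calc ∑ s : Fin n → Bool, Real.exp ((∑ i, (if s i then z i else -z i))*x)
          = ∑ s : Fin n → Bool, ∏ i, Real.exp ((if s i then z i else -z i) * x) := by
            refine Finset.sum_congr rfl fun s _ => ?_
            rw [← Real.exp_sum, Finset.sum_mul]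
        _ = ∏ i, ∑ b : Bool, Real.exp ((if b then z i else -z i) * x) := this
        _ = ∏ i, (Real.exp (z i * x) + Real.exp (-(z i * x))) := by
            refine Finset.prod_congr rfl fun i _ => ?_
            simp [Fintype.sum_bool, neg_mul]
    have prodbd : ∏ i, (Real.exp (z i * x) + Real.exp (-(z i * x)))
        ≤ 2^n * Real.exp (S * x^2 / 2) := by
      calc ∏ i, (Real.exp (z i * x) + Real.exp (-(z i * x)))
          ≤ ∏ i : Fin n, 2 * Real.exp ((z i * x)^2 / 2) := by
            refine Finset.prod_le_prod (fun i _ => by positivity) (fun i _ => ?_)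
            have := Real.cosh_le_exp_half_sq (z i * x)
            rw [Real.cosh_eq] at this
            linarith [this]
        _ = 2^n * Real.exp (S * x^2 / 2) := by
            rw [Finset.prod_mul_distrib, Finset.prod_const, ← Real.exp_sum]
            congr 2
            · simp
            rw [hS, Finset.sum_mul, Finset.sum_div]
            exact Finset.sum_congr rfl fun i _ => by ring
    calc ∑ s : Fin n → Bool,
        Real.exp ((∑ i, (if s i then z i else -z i))*x - (1+S)*x^2/2)
        = (∑ s : Fin n → Bool, Real.exp ((∑ i, (if s i then z i else -z i))*x))
            * Real.exp (-((1+S)*x^2/2)) := by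
          rw [Finset.sum_mul]
          exact Finset.sum_congr rfl fun s _ => by rw [← Real.exp_add]; ring_nf
      _ ≤ (2^n * Real.exp (S * x^2 / 2)) * Real.exp (-((1+S)*x^2/2)) := by
          rw [expand]
          exact mul_le_mul_of_nonneg_right prodbd (Real.exp_nonneg _)
      _ = 2^n * Real.exp (-(1/2) * x^2) := by
          rw [mul_assoc, ← Real.exp_add]
          congr 2; ring
  -- put it together
  have step1 : ∑ s : Fin n → Bool,
      Real.sqrt (1/(1+S)) * Real.exp ((∑ i, (if s i then z i else -z i))^2 / (2+2*S))
      = (Real.sqrt (2*π))⁻¹ * ∫ x : ℝ, ∑ s : Fin n → Bool,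
          Real.exp ((∑ i, (if s i then z i else -z i))*x - (1+S)*x^2/2) := by
    calc ∑ s : Fin n → Bool,
        Real.sqrt (1/(1+S)) * Real.exp ((∑ i, (if s i then z i else -z i))^2 / (2+2*S))
        = ∑ s : Fin n → Bool, (Real.sqrt (2*π))⁻¹ *
            ∫ x : ℝ, Real.exp ((∑ i, (if s i then z i else -z i))*x - (1+S)*x^2/2) :=
          Finset.sum_congr rfl fun s _ => key (∑ i, (if s i then z i else -z i))
      _ = (Real.sqrt (2*π))⁻¹ * ∑ s : Fin n → Bool,
            ∫ x : ℝ, Real.exp ((∑ i, (if s i then z i else -z i))*x - (1+S)*x^2/2) :=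
          (Finset.mul_sum _ _ _).symm
      _ = (Real.sqrt (2*π))⁻¹ * ∫ x : ℝ, ∑ s : Fin n → Bool,
            Real.exp ((∑ i, (if s i then z i else -z i))*x - (1+S)*x^2/2) := by
          rw [MeasureTheory.integral_finset_sum (μ := volume) Finset.univ
            (f := fun (s : Fin n → Bool) (x : ℝ) =>
              Real.exp ((∑ i, (if s i then z i else -z i))*x - (1+S)*x^2/2))
            (fun s _ => hint _)]
  have step2 : (∫ x : ℝ, ∑ s : Fin n → Bool,
      Real.exp ((∑ i, (if s i then z i else -z i))*x - (1+S)*x^2/2))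
      ≤ ∫ x : ℝ, 2^n * Real.exp (-(1/2) * x^2) := by
    refine MeasureTheory.integral_mono (integrable_finset_sum _ fun s _ => hint _)
      ((integrable_exp_neg_mul_sq (by norm_num : (0:ℝ) < 1/2)).const_mul _) hpt
  have step3 : (∫ x : ℝ, (2:ℝ)^n * Real.exp (-(1/2) * x^2))
      = 2^n * Real.sqrt (2*π) := by
    rw [MeasureTheory.integral_const_mul, integral_gaussian]
    congr 1
    rw [div_div_eq_mul_div, div_one, mul_comm]
  calc (1 / 2 ^ n) * ∑ s : Fin n → Bool,
        Real.sqrt (1 / (1 + S)) *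
          Real.exp ((∑ i, (if s i then z i else -z i)) ^ 2 / (2 + 2 * S))
      = (1 / 2 ^ n) * ((Real.sqrt (2*π))⁻¹ * ∫ x : ℝ, ∑ s : Fin n → Bool,
          Real.exp ((∑ i, (if s i then z i else -z i))*x - (1+S)*x^2/2)) := by
        rw [step1]
    _ ≤ (1 / 2 ^ n) * ((Real.sqrt (2*π))⁻¹ * (2^n * Real.sqrt (2*π))) := by
        refine mul_le_mul_of_nonneg_left ?_ (by positivity)
        refine mul_le_mul_of_nonneg_left ?_ (by positivity)
        rw [← step3]; exact step2
    _ = 1 := by field_simp
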